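/- Let d be a natural number, let M and K be skew-symmetric real d×d matrices, let S : ℝ^d → ℝ be continuously differentiable, and let z : ℝ × ℝ → ℝ^d be twice continuously differentiable and satisfy the multi-symplectic equation M z_t + K z_x = ∇S(z) on an open set U ⊆ ℝ × ℝ. Define the density functions I(x,t) = −(1/2)⟨z_x(x,t), M z(x,t)⟩ and G(x,t) = S(z(x,t)) + (1/2)⟨z_t(x,t), M z(x,t)⟩. Then the local momentum conservation law ∂_t I + ∂_x G = 0 holds at every point of U. -/

import Mathlib

open Matrix

/-- Partial derivative with respect to the first argument (time). -/
noncomputable def pt {E : Type*} [NormedAddCommGroup E] [NormedSpace ℝ E]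
    (z : ℝ × ℝ → E) (p : ℝ × ℝ) : E :=
  deriv (fun s => z (s, p.2)) p.1

/-- Partial derivative with respect to the second argument (space). -/
noncomputable def px {E : Type*} [NormedAddCommGroup E] [NormedSpace ℝ E]
    (z : ℝ × ℝ → E) (p : ℝ × ℝ) : E :=
  deriv (fun s => z (p.1, s)) p.2

section aux
variable {E : Type*} [NormedAddCommGroup E] [NormedSpace ℝ E]

/-- curve `s ↦ (s, c)` has derivative `(1,0)`. -/
lemma hasDerivAt_curve1 (t c : ℝ) : HasDerivAt (fun s : ℝ => (s, c)) ((1 : ℝ), (0 : ℝ)) t :=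
  (hasDerivAt_id t).prodMk (hasDerivAt_const t c)

lemma hasDerivAt_curve2 (t c : ℝ) : HasDerivAt (fun s : ℝ => (c, s)) ((0 : ℝ), (1 : ℝ)) t :=
  (hasDerivAt_const t c).prodMk (hasDerivAt_id t)

lemma hasDerivAt_pt {z : ℝ × ℝ → E} {p : ℝ × ℝ} (h : DifferentiableAt ℝ z p) :
    HasDerivAt (fun s => z (s, p.2)) (fderiv ℝ z p (1, 0)) p.1 := by
  have := h.hasFDerivAt.comp_hasDerivAt p.1 (hasDerivAt_curve1 p.1 p.2)
  simpa [Function.comp_def] using this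

lemma hasDerivAt_px {z : ℝ × ℝ → E} {p : ℝ × ℝ} (h : DifferentiableAt ℝ z p) :
    HasDerivAt (fun s => z (p.1, s)) (fderiv ℝ z p (0, 1)) p.2 := by
  have := h.hasFDerivAt.comp_hasDerivAt p.2 (hasDerivAt_curve2 p.2 p.1)
  simpa [Function.comp_def] using this

lemma pt_eq {z : ℝ × ℝ → E} {p : ℝ × ℝ} (h : DifferentiableAt ℝ z p) :
    pt z p = fderiv ℝ z p (1, 0) := (hasDerivAt_pt h).deriv

lemma px_eq {z : ℝ × ℝ → E} {p : ℝ × ℝ} (h : DifferentiableAt ℝ z p) :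
    px z p = fderiv ℝ z p (0, 1) := (hasDerivAt_px h).deriv

end aux

/-- Local momentum conservation law for a multi-symplectic PDE `M z_t + K z_x = ∇S(z)`:
`∂_t I + ∂_x G = 0` on `U`, with `I = −½⟨z_x, M z⟩` and `G = S(z) + ½⟨z_t, M z⟩`. -/
theorem stmt_1 (d : ℕ) (M K : Matrix (Fin d) (Fin d) ℝ)
    (hM : Mᵀ = -M) (hK : Kᵀ = -K)
    (S : EuclideanSpace ℝ (Fin d) → ℝ) (hS : ContDiff ℝ 1 S)
    (U : Set (ℝ × ℝ)) (hU : IsOpen U)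
    (z : ℝ × ℝ → EuclideanSpace ℝ (Fin d)) (hz : ContDiffOn ℝ 2 z U)
    (heq : ∀ p ∈ U,
      Matrix.toEuclideanLin M (pt z p) + Matrix.toEuclideanLin K (px z p)
        = gradient S (z p))
    (I G : ℝ × ℝ → ℝ)
    (hI : ∀ p, I p = -(1 / 2) * (inner ℝ (px z p) (Matrix.toEuclideanLin M (z p)) : ℝ))
    (hG : ∀ p, G p = S (z p)
      + (1 / 2) * (inner ℝ (pt z p) (Matrix.toEuclideanLin M (z p)) : ℝ)) :
    ∀ p ∈ U, pt I p + px G p = 0 := by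
  intro p hp
  -- continuous linear map versions
  set A : EuclideanSpace ℝ (Fin d) →L[ℝ] EuclideanSpace ℝ (Fin d) := LinearMap.toContinuousLinearMap (Matrix.toEuclideanLin M) with hA
  set B : EuclideanSpace ℝ (Fin d) →L[ℝ] EuclideanSpace ℝ (Fin d) := LinearMap.toContinuousLinearMap (Matrix.toEuclideanLin K) with hB
  have hAapp : ∀ v : EuclideanSpace ℝ (Fin d), A v = Matrix.toEuclideanLin M v := fun _ => rfl
  have hBapp : ∀ v : EuclideanSpace ℝ (Fin d), B v = Matrix.toEuclideanLin K v := fun _ => rfl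
  -- skewness
  have skew : ∀ (N : Matrix (Fin d) (Fin d) ℝ), Nᵀ = -N → ∀ u v : EuclideanSpace ℝ (Fin d),
      (inner ℝ u (Matrix.toEuclideanLin N v) : ℝ) = -inner ℝ (Matrix.toEuclideanLin N u) v := by
    intro N hN u v
    have hNH : Nᴴ = -N := by
      ext i j
      simp [conjTranspose_apply]
      simpa using congrFun (congrFun hN i) j
    have h := Matrix.toEuclideanLin_conjTranspose_eq_adjoint N
    rw [hNH] at h
    have h2 := LinearMap.adjoint_inner_left (Matrix.toEuclideanLin N) v u
    rw [← h] at h2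
    simp only [map_neg, LinearMap.neg_apply] at h2
    rw [← h2, inner_neg_left]
  -- smoothness facts at p
  have hpU : U ∈ nhds p := hU.mem_nhds hp
  have hzp : ContDiffAt ℝ 2 z p := hz.contDiffAt hpU
  have hdz : ∀ q ∈ U, DifferentiableAt ℝ z q := fun q hq =>
    ((hz.contDiffAt (hU.mem_nhds hq)).differentiableAt (by norm_num))
  have hDz : ContDiffAt ℝ 1 (fderiv ℝ z) p := hzp.fderiv_right (by norm_num)
  have hDzd : DifferentiableAt ℝ (fderiv ℝ z) p := hDz.differentiableAt (by norm_num)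
  set D2 := fderiv ℝ (fderiv ℝ z) p with hD2
  have hsymm : D2 ((1:ℝ),(0:ℝ)) ((0:ℝ),(1:ℝ)) = D2 (0,1) (1,0) :=
    hzp.isSymmSndFDerivAt (by simp [minSmoothness_of_isRCLikeNormedField]) _ _
  set zt : EuclideanSpace ℝ (Fin d) := fderiv ℝ z p (1, 0) with hzt
  set zx : EuclideanSpace ℝ (Fin d) := fderiv ℝ z p (0, 1) with hzx
  have hptp : pt z p = zt := pt_eq (hdz p hp)
  have hpxp : px z p = zx := px_eq (hdz p hp)
  -- derivative of q ↦ fderiv ℝ z q v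
  have hev : ∀ v : ℝ × ℝ, HasFDerivAt (fun q => fderiv ℝ z q v)
      ((ContinuousLinearMap.apply ℝ (EuclideanSpace ℝ (Fin d)) v).comp D2) p := fun v =>
    (ContinuousLinearMap.apply ℝ (EuclideanSpace ℝ (Fin d)) v).hasFDerivAt.comp p hDzd.hasFDerivAt
  -- t-derivative of px z along the horizontal line
  have hpx_t : HasDerivAt (fun s => px z (s, p.2)) (D2 (1,0) (0,1)) p.1 := by
    have h1 : HasDerivAt (fun s => fderiv ℝ z (s, p.2) ((0:ℝ),(1:ℝ)))
        (D2 (1,0) (0,1)) p.1 := by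
      have := (hev (0,1)).comp_hasDerivAt p.1 (hasDerivAt_curve1 p.1 p.2)
      simpa [Function.comp_def] using this
    apply h1.congr_of_eventuallyEq
    have hcont : ∀ᶠ s in nhds p.1, (s, p.2) ∈ U := by
      have : Continuous (fun s : ℝ => (s, p.2)) := by fun_prop
      exact this.continuousAt.preimage_mem_nhds (by simpa using hpU)
    filter_upwards [hcont] with s hs
    exact px_eq (hdz _ hs)
  -- x-derivative of pt z along the vertical line
  have hpt_x : HasDerivAt (fun s => pt z (p.1, s)) (D2 (0,1) (1,0)) p.2 := by
    have h1 : HasDerivAt (fun s => fderiv ℝ z (p.1, s) ((1:ℝ),(0:ℝ)))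
        (D2 (0,1) (1,0)) p.2 := by
      have := (hev (1,0)).comp_hasDerivAt p.2 (hasDerivAt_curve2 p.2 p.1)
      simpa [Function.comp_def] using this
    apply h1.congr_of_eventuallyEq
    have hcont : ∀ᶠ s in nhds p.2, (p.1, s) ∈ U := by
      have : Continuous (fun s : ℝ => (p.1, s)) := by fun_prop
      exact this.continuousAt.preimage_mem_nhds (by simpa using hpU)
    filter_upwards [hcont] with s hs
    exact pt_eq (hdz _ hs)
  -- curves of z itself
  have hz_t : HasDerivAt (fun s => z (s, p.2)) zt p.1 := hasDerivAt_pt (hdz p hp)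
  have hz_x : HasDerivAt (fun s => z (p.1, s)) zx p.2 := hasDerivAt_px (hdz p hp)
  -- A ∘ z curves
  have hAz_t : HasDerivAt (fun s => A (z (s, p.2))) (A zt) p.1 :=
    A.hasFDerivAt.comp_hasDerivAt p.1 hz_t
  have hAz_x : HasDerivAt (fun s => A (z (p.1, s))) (A zx) p.2 :=
    A.hasFDerivAt.comp_hasDerivAt p.2 hz_x
  -- value of pt I p
  have hIt : HasDerivAt (fun s => I (s, p.2))
      (-(1/2) * ((inner ℝ (px z p) (A zt) : ℝ) + inner ℝ (D2 (1,0) (0,1)) (A (z p)))) p.1 := by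
    have hinner := (hpx_t.inner ℝ hAz_t)
    have := hinner.const_mul (-(1/2) : ℝ)
    refine HasDerivAt.congr_of_eventuallyEq ?_ (Filter.Eventually.of_forall fun s => hI (s, p.2))
    convert this using 1 <;> rfl
  -- gradient and fderiv of S
  have hSd : DifferentiableAt ℝ S (z p) := (hS.contDiffAt).differentiableAt (by norm_num)
  have hgrad : ∀ v : EuclideanSpace ℝ (Fin d),
      fderiv ℝ S (z p) v = (inner ℝ (gradient S (z p)) v : ℝ) := by
    intro v
    have h1 : HasFDerivAt S (InnerProductSpace.toDual ℝ _ (gradient S (z p))) (z p) :=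
      (hasGradientAt_iff_hasFDerivAt.mp hSd.hasGradientAt)
    rw [h1.fderiv]
    simp [InnerProductSpace.toDual_apply_apply]
  have hSz_x : HasDerivAt (fun s => S (z (p.1, s)))
      ((inner ℝ (gradient S (z p)) zx : ℝ)) p.2 := by
    have := hSd.hasFDerivAt.comp_hasDerivAt p.2 hz_x
    rw [← hgrad]
    simpa [Function.comp_def] using this
  -- value of px G p
  have hGx : HasDerivAt (fun s => G (p.1, s))
      ((inner ℝ (gradient S (z p)) zx : ℝ)
        + (1/2) * ((inner ℝ (pt z p) (A zx) : ℝ) + inner ℝ (D2 (0,1) (1,0)) (A (z p)))) p.2 := by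
    have hinner := (hpt_x.inner ℝ hAz_x)
    have h2 := hSz_x.add (hinner.const_mul ((1/2) : ℝ))
    refine HasDerivAt.congr_of_eventuallyEq ?_ (Filter.Eventually.of_forall fun s => hG (p.1, s))
    convert h2 using 1 <;> rfl
  -- assemble
  have e1 : pt I p = -(1/2) * ((inner ℝ (px z p) (A zt) : ℝ) + inner ℝ (D2 (1,0) (0,1)) (A (z p))) :=
    hIt.deriv
  have e2 : px G p = (inner ℝ (gradient S (z p)) zx : ℝ)
      + (1/2) * ((inner ℝ (pt z p) (A zx) : ℝ) + inner ℝ (D2 (0,1) (1,0)) (A (z p))) := hGx.deriv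
  rw [e1, e2, hptp, hpxp, hsymm]
  have hgradeq : gradient S (z p) = Matrix.toEuclideanLin M zt + Matrix.toEuclideanLin K zx := by
    rw [← heq p hp, hptp, hpxp]
  rw [hgradeq]
  simp only [hAapp, inner_add_left]
  have s1 : (inner ℝ zx (Matrix.toEuclideanLin M zt) : ℝ)
      = -inner ℝ (Matrix.toEuclideanLin M zx) zt := skew M hM zx zt
  have s2 : (inner ℝ zt (Matrix.toEuclideanLin M zx) : ℝ)
      = -inner ℝ (Matrix.toEuclideanLin M zt) zx := skew M hM zt zx
  have s3 : (inner ℝ zx (Matrix.toEuclideanLin K zx) : ℝ)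
      = -inner ℝ (Matrix.toEuclideanLin K zx) zx := skew K hK zx zx
  have c1 : (inner ℝ (Matrix.toEuclideanLin M zt) zx : ℝ)
      = inner ℝ zx (Matrix.toEuclideanLin M zt) := real_inner_comm _ _
  have c2 : (inner ℝ (Matrix.toEuclideanLin M zx) zt : ℝ)
      = inner ℝ zt (Matrix.toEuclideanLin M zx) := real_inner_comm _ _
  have c3 : (inner ℝ (Matrix.toEuclideanLin K zx) zx : ℝ)
      = inner ℝ zx (Matrix.toEuclideanLin K zx) := real_inner_comm _ _
  have hKzero : (inner ℝ (Matrix.toEuclideanLin K zx) zx : ℝ) = 0 := by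
    rw [c3] at s3 ⊢
    linarith
  linarith [s1, s2, c1, c2, hKzero]
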